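/- Let G be a finite simple graph with n vertices and m edges. Then the coefficient of x^{n−4} in the Laplacian matching polynomial LM_G(x) equals E_4 − m·E_2 + E_1·A_2 − A_3 − B + φ_2(G), where E_r is the r-th elementary symmetric polynomial of the degree sequence of G, A_r = Σ_{v∈V(G)} d_G(v)^r, B = Σ_{xy∈E(G)} d_G(x)·d_G(y), and φ_2(G) is the number of 2-matchings of G. -/

import Mathlib

open Polynomial Finset

namespace LMRIV

open scoped Classical

variable {V : Type*}

/-- The degree of a vertex. -/
noncomputable def deg [Fintype V] (G : SimpleGraph V) (v : V) : ℕ :=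
  (univ.filter fun w => G.Adj v w).card

/-- The finset of edges of `G`. -/
noncomputable def edges [Fintype V] (G : SimpleGraph V) : Finset (Sym2 V) :=
  univ.filter fun e => e ∈ G.edgeSet

/-- A matching: a set of pairwise disjoint edges. -/
def IsMatching (G : SimpleGraph V) (M : Finset (Sym2 V)) : Prop :=
  (↑M : Set (Sym2 V)) ⊆ G.edgeSet ∧
    ∀ e ∈ M, ∀ f ∈ M, e ≠ f → ∀ x : V, x ∈ e → x ∉ f

/-- The finset of all matchings of `G` (including the empty matching). -/
noncomputable def matchings [Fintype V] (G : SimpleGraph V) : Finset (Finset (Sym2 V)) :=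
  univ.filter fun M => IsMatching G M

/-- The set of vertices covered by a matching. -/
noncomputable def covered [Fintype V] (M : Finset (Sym2 V)) : Finset V :=
  univ.filter fun x => ∃ e ∈ M, x ∈ e

/-- The Laplacian matching polynomial of `G`, with coefficients in `R`. -/
noncomputable def LM (R : Type*) [CommRing R] [Fintype V] (G : SimpleGraph V) :
    Polynomial R :=
  ∑ M ∈ matchings G, (-1 : Polynomial R) ^ M.card *
    ∏ v ∈ univ \ covered M, (X - C (deg G v : R))

/-- `p_r(G)`: the sum of the `r`-th powers of the complex roots of `LM_G`. -/
noncomputable def psum [Fintype V] (G : SimpleGraph V) (r : ℕ) : ℂ :=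
  (((LM ℂ G).roots).map (· ^ r)).sum

/-- `A_r(G) = Σ_v d_G(v)^r`. -/
noncomputable def A [Fintype V] (G : SimpleGraph V) (r : ℕ) : ℕ :=
  ∑ v : V, (deg G v) ^ r

/-- `B(G) = Σ_{xy ∈ E(G)} d_G(x) d_G(y)`. -/
noncomputable def B [Fintype V] (G : SimpleGraph V) : ℕ :=
  ∑ e ∈ edges G, Sym2.lift ⟨fun x y => deg G x * deg G y, fun x y => mul_comm _ _⟩ e

/-- `C(G) = Σ_{xy ∈ E(G)} (d_G(x)^2 d_G(y) + d_G(x) d_G(y)^2)`. -/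
noncomputable def Csum [Fintype V] (G : SimpleGraph V) : ℕ :=
  ∑ e ∈ edges G,
    Sym2.lift ⟨fun x y => deg G x ^ 2 * deg G y + deg G x * deg G y ^ 2,
      fun x y => by ring⟩ e

/-- The graph obtained from `G` by adding the edge `uv`. -/
def addEdge (G : SimpleGraph V) (u v : V) : SimpleGraph V :=
  G ⊔ SimpleGraph.fromEdgeSet {s(u, v)}

/-- `S_w = Σ_{x ∈ N_G(w)} d_G(x)`. -/
noncomputable def Ssum [Fintype V] (G : SimpleGraph V) (w : V) : ℕ :=
  ∑ x ∈ univ.filter fun x => G.Adj w x, deg G x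

/-- `T_w = Σ_{x ∈ N_G(w)} d_G(x)^2`. -/
noncomputable def Tsum [Fintype V] (G : SimpleGraph V) (w : V) : ℕ :=
  ∑ x ∈ univ.filter fun x => G.Adj w x, (deg G x) ^ 2

/-- The `r`-th elementary symmetric polynomial of the degree sequence of `G`. -/
noncomputable def esymmDeg [Fintype V] (G : SimpleGraph V) (r : ℕ) : ℕ :=
  ∑ s ∈ univ.powersetCard r, ∏ v ∈ s, deg G v

/-- `φ_2(G)`: the number of 2-matchings of `G`. -/
noncomputable def phi2 [Fintype V] (G : SimpleGraph V) : ℕ :=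
  ((matchings G).filter fun M => M.card = 2).card


section Aux

variable {ι : Type*}

lemma vieta (s : Finset ι) (f : ι → ℂ) {k : ℕ} (h : k ≤ s.card) :
    (∏ i ∈ s, (X - C (f i))).coeff (s.card - k) =
      (-1)^k * ∑ t ∈ s.powersetCard k, ∏ i ∈ t, f i := by
  have h2 : s.card - (s.card - k) = k := Nat.sub_sub_self h
  have h3 := Finset.prod_X_add_C_coeff s (fun i => -f i) (k := s.card - k) (Nat.sub_le _ _)
  simp only [map_neg, ← sub_eq_add_neg, h2] at h3
  rw [h3, Finset.mul_sum]
  refine Finset.sum_congr rfl fun t ht => ?_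
  have h4 : ∀ x ∈ t, -f x = (-1) * f x := fun x _ => by ring
  rw [Finset.prod_congr rfl h4, Finset.prod_mul_distrib, Finset.prod_const,
    (Finset.mem_powersetCard.mp ht).2]

lemma natDegree_prodXC (s : Finset ι) (f : ι → ℂ) :
    (∏ i ∈ s, (X - C (f i))).natDegree = s.card := by
  rw [Polynomial.natDegree_prod_of_monic _ _ (fun i _ => monic_X_sub_C _)]
  simp

lemma sum_powersetCard_insert {x : ι} {s : Finset ι} (h : x ∉ s) (n : ℕ) (f : ι → ℂ) :
    ∑ t ∈ (insert x s).powersetCard (n+1), ∏ i ∈ t, f i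
      = (∑ t ∈ s.powersetCard (n+1), ∏ i ∈ t, f i)
        + f x * ∑ t ∈ s.powersetCard n, ∏ i ∈ t, f i := by
  rw [Finset.powersetCard_succ_insert h]
  rw [Finset.sum_union ?disj]
  case disj =>
    rw [Finset.disjoint_left]
    rintro t ht hmem
    have hx : x ∉ t := fun hx => h ((Finset.mem_powersetCard.mp ht).1 hx)
    obtain ⟨u, _, rfl⟩ := Finset.mem_image.mp hmem
    exact hx (Finset.mem_insert_self _ _)
  congr 1
  rw [Finset.sum_image ?inj, Finset.mul_sum]
  case inj =>
    intro a ha b hb hab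
    have hxa : x ∉ a := fun hh => h ((Finset.mem_powersetCard.mp ha).1 hh)
    have hxb : x ∉ b := fun hh => h ((Finset.mem_powersetCard.mp hb).1 hh)
    rw [← Finset.erase_insert hxa, ← Finset.erase_insert hxb, hab]
  refine Finset.sum_congr rfl fun t ht => ?_
  have hx : x ∉ t := fun hh => h ((Finset.mem_powersetCard.mp ht).1 hh)
  rw [Finset.prod_insert hx]

lemma powersetCard_one_sum (s : Finset ι) (f : ι → ℂ) :
    ∑ t ∈ s.powersetCard 1, ∏ i ∈ t, f i = ∑ v ∈ s, f v := by
  rw [Finset.powersetCard_one, Finset.sum_map]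
  simp

lemma esymm2_remove [Fintype ι] (f : ι → ℂ) {x y : ι} (hxy : x ≠ y) :
    ∑ t ∈ ((univ : Finset ι) \ {x, y}).powersetCard 2, ∏ i ∈ t, f i
      = (∑ t ∈ (univ : Finset ι).powersetCard 2, ∏ i ∈ t, f i)
        - (∑ v, f v) * (f x + f y) + f x ^ 2 + f y ^ 2 + f x * f y := by
  set r := ((univ : Finset ι) \ {x, y}) with hr
  have hyr : y ∉ r := by simp [hr]
  have hxr : x ∉ insert y r := by simp [hr, hxy]
  have hu : (univ : Finset ι) = insert x (insert y r) := by
    ext a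
    by_cases hax : a = x <;> by_cases hay : a = y <;> simp [hr, hax, hay]
  have h0 : ∑ t ∈ r.powersetCard 0, ∏ i ∈ t, f i = 1 := by
    simp [Finset.powersetCard_zero]
  rw [hu, sum_powersetCard_insert hxr 1 f, sum_powersetCard_insert hyr 1 f,
    sum_powersetCard_insert hyr 0 f, h0, powersetCard_one_sum,
    Finset.sum_insert hxr, Finset.sum_insert hyr]
  ring

end Aux

section Graph

variable [Fintype V] (G : SimpleGraph V)

lemma deg_eq_degree (v : V) : deg G v = G.degree v := by
  rw [deg, SimpleGraph.degree]
  congr 1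
  ext w
  simp [SimpleGraph.mem_neighborFinset]

lemma edges_eq : edges G = G.edgeFinset := by
  ext e
  simp [edges, SimpleGraph.mem_edgeFinset]

lemma edge_cases {P : Sym2 V → Prop} (h : ∀ x y, G.Adj x y → P s(x, y)) :
    ∀ e ∈ edges G, P e := by
  intro e he
  have heE : e ∈ G.edgeSet := by simpa [edges] using he
  induction e using Sym2.ind with
  | _ x y => exact h x y (G.mem_edgeSet.mp heE)

lemma handshake (f : V → ℂ) :
    ∑ e ∈ edges G, ∑ v ∈ univ.filter (· ∈ e), f v = ∑ v, (deg G v : ℂ) * f v := by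
  have h1 : ∀ e : Sym2 V, ∑ v ∈ univ.filter (· ∈ e), f v
      = ∑ v : V, if v ∈ e then f v else 0 := fun e => Finset.sum_filter _ _
  simp only [h1]
  rw [Finset.sum_comm]
  refine Finset.sum_congr rfl fun v _ => ?_
  rw [← Finset.sum_filter]
  have hst : (edges G).filter (fun e => v ∈ e) = G.incidenceFinset v := by
    rw [edges_eq, SimpleGraph.incidenceFinset_eq_filter]
  rw [hst, Finset.sum_const, SimpleGraph.card_incidenceFinset_eq_degree, ← deg_eq_degree,
    nsmul_eq_mul]

lemma covered_pair (x y : V) : covered ({s(x, y)} : Finset (Sym2 V)) = {x, y} := by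
  ext a
  simp [covered, Sym2.mem_iff]

lemma covered_card {M : Finset (Sym2 V)} (hM : M ∈ matchings G) :
    (covered M).card = 2 * M.card := by
  have hIsM : IsMatching G M := by simpa [matchings] using hM
  have hcov : covered M = M.biUnion (fun e => univ.filter (· ∈ e)) := by
    ext a
    simp [covered]
  have hdisj : ∀ e ∈ M, ∀ f ∈ M, e ≠ f →
      Disjoint (univ.filter (· ∈ e)) (univ.filter (· ∈ f)) := by
    intro e he f hf hef
    rw [Finset.disjoint_left]
    intro a ha haf
    exact hIsM.2 e he f hf hef a (by simpa using ha) (by simpa using haf)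
  rw [hcov, Finset.card_biUnion hdisj]
  have h2 : ∀ e ∈ M, (univ.filter (· ∈ e)).card = 2 := by
    intro e he
    have heE : e ∈ G.edgeSet := hIsM.1 he
    induction e using Sym2.ind with
    | _ x y =>
      have hxy : x ≠ y := (G.mem_edgeSet.mp heE).ne
      have hfil : univ.filter (· ∈ s(x, y)) = ({x, y} : Finset V) := by
        ext a
        simp [Sym2.mem_iff]
      rw [hfil, Finset.card_insert_of_notMem (by simp [hxy]), Finset.card_singleton]
  rw [Finset.sum_congr rfl h2, Finset.sum_const, smul_eq_mul, mul_comm]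

lemma esymmDeg_two_cast : (esymmDeg G 2 : ℂ)
    = ∑ t ∈ (univ : Finset V).powersetCard 2, ∏ i ∈ t, (deg G i : ℂ) := by
  rw [esymmDeg]
  push_cast
  rfl

lemma esymmDeg_one_cast : (esymmDeg G 1 : ℂ) = ∑ v, (deg G v : ℂ) := by
  rw [esymmDeg]
  push_cast
  rw [powersetCard_one_sum]

lemma S_edge {x y : V} (h : G.Adj x y) :
    ∑ t ∈ (univ \ covered ({s(x, y)} : Finset (Sym2 V))).powersetCard 2,
        ∏ i ∈ t, (deg G i : ℂ)
      = (esymmDeg G 2 : ℂ) - (esymmDeg G 1 : ℂ) * ((deg G x : ℂ) + (deg G y : ℂ))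
        + (deg G x : ℂ) ^ 2 + (deg G y : ℂ) ^ 2 + (deg G x : ℂ) * (deg G y : ℂ) := by
  rw [covered_pair, esymm2_remove (fun v => (deg G v : ℂ)) h.ne,
    ← esymmDeg_two_cast, ← esymmDeg_one_cast]

lemma B_cast : (B G : ℂ) = ∑ e ∈ edges G,
    Sym2.lift ⟨fun a b => (deg G a : ℂ) * (deg G b : ℂ), fun a b => mul_comm _ _⟩ e := by
  rw [B, Nat.cast_sum]
  refine Finset.sum_congr rfl (edge_cases G fun x y _ => ?_)
  simp

lemma A2_cast : (A G 2 : ℂ) = ∑ v, (deg G v : ℂ) * (deg G v : ℂ) := by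
  rw [A]
  push_cast
  refine Finset.sum_congr rfl fun v _ => by ring

lemma A3_cast : (A G 3 : ℂ) = ∑ v, (deg G v : ℂ) * ((deg G v : ℂ) * (deg G v : ℂ)) := by
  rw [A]
  push_cast
  refine Finset.sum_congr rfl fun v _ => by ring

lemma sum_S :
    ∑ e ∈ edges G, (∑ t ∈ (univ \ covered ({e} : Finset (Sym2 V))).powersetCard 2,
        ∏ i ∈ t, (deg G i : ℂ))
      = ((edges G).card : ℂ) * (esymmDeg G 2 : ℂ) - (esymmDeg G 1 : ℂ) * (A G 2 : ℂ)
        + (A G 3 : ℂ) + (B G : ℂ) := by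
  have key : ∀ e ∈ edges G,
      (∑ t ∈ (univ \ covered ({e} : Finset (Sym2 V))).powersetCard 2, ∏ i ∈ t, (deg G i : ℂ))
        = (esymmDeg G 2 : ℂ)
          - (esymmDeg G 1 : ℂ) * (∑ v ∈ univ.filter (· ∈ e), (deg G v : ℂ))
          + (∑ v ∈ univ.filter (· ∈ e), (deg G v : ℂ) * (deg G v : ℂ))
          + Sym2.lift ⟨fun a b => (deg G a : ℂ) * (deg G b : ℂ), fun a b => mul_comm _ _⟩ e := by
    refine edge_cases G fun x y hadj => ?_
    have hfil : univ.filter (· ∈ s(x, y)) = ({x, y} : Finset V) := by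
      ext a
      simp [Sym2.mem_iff]
    rw [hfil, Finset.sum_pair hadj.ne, Finset.sum_pair hadj.ne, Sym2.lift_mk, S_edge G hadj]
    ring
  rw [Finset.sum_congr rfl key]
  have hs1 : ∑ e ∈ edges G, (∑ v ∈ univ.filter (· ∈ e), (deg G v : ℂ)) = (A G 2 : ℂ) := by
    rw [handshake, A2_cast]
  have hs2 : ∑ e ∈ edges G, (∑ v ∈ univ.filter (· ∈ e), (deg G v : ℂ) * (deg G v : ℂ))
      = (A G 3 : ℂ) := by
    rw [handshake, A3_cast]
  rw [Finset.sum_add_distrib, Finset.sum_add_distrib, Finset.sum_sub_distrib,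
    Finset.sum_const, ← Finset.mul_sum, hs1, hs2, ← B_cast, nsmul_eq_mul]

end Graph

section Main

variable [Fintype V] (G : SimpleGraph V)

lemma matchings_filter_zero :
    (matchings G).filter (fun M => M.card = 0) = {(∅ : Finset (Sym2 V))} := by
  ext M
  simp only [Finset.mem_filter, matchings, Finset.mem_univ, true_and, Finset.card_eq_zero,
    Finset.mem_singleton, Finset.mem_filter]
  constructor
  · exact fun h => h.2
  · rintro rfl
    exact ⟨⟨by simp, by simp⟩, rfl⟩

lemma matchings_filter_one :
    (matchings G).filter (fun M => M.card = 1)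
      = (edges G).image (fun e => ({e} : Finset (Sym2 V))) := by
  ext M
  simp only [Finset.mem_filter, matchings, Finset.mem_univ, true_and, Finset.card_eq_one,
    Finset.mem_image, edges]
  constructor
  · rintro ⟨hm, e, rfl⟩
    refine ⟨e, by simp [hm.1 (by simp : e ∈ (↑({e} : Finset (Sym2 V)) : Set (Sym2 V)))], rfl⟩
  · rintro ⟨e, he, rfl⟩
    have heE : e ∈ G.edgeSet := by simpa using he
    refine ⟨⟨?_, ?_⟩, e, rfl⟩
    · intro f hf
      simp only [Finset.coe_singleton, Set.mem_singleton_iff] at hf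
      subst hf
      exact heE
    · intro a ha b hb hab
      simp only [Finset.mem_singleton] at ha hb
      exact absurd (ha.trans hb.symm) hab

lemma coeff_neg_one_pow_mul (k j : ℕ) (P : Polynomial ℂ) :
    ((-1 : Polynomial ℂ) ^ k * P).coeff j = (-1 : ℂ) ^ k * P.coeff j := by
  rw [show ((-1 : Polynomial ℂ) ^ k) = C ((-1 : ℂ) ^ k) by simp, coeff_C_mul]

theorem coeff_four' (hn : 4 ≤ Fintype.card V) :
    (LM ℂ G).coeff (Fintype.card V - 4) =
      (esymmDeg G 4 : ℂ) - ((edges G).card : ℂ) * (esymmDeg G 2 : ℂ)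
        + (esymmDeg G 1 : ℂ) * (A G 2 : ℂ) - (A G 3 : ℂ) - (B G : ℂ) + (phi2 G : ℂ) := by
  set n := Fintype.card V with hnn
  set g : Finset (Sym2 V) → ℂ := fun M =>
    (-1 : ℂ) ^ M.card * (∏ v ∈ univ \ covered M, (X - C ((deg G v : ℂ)))).coeff (n - 4)
    with hg
  have hLM : (LM ℂ G).coeff (n - 4) = ∑ M ∈ matchings G, g M := by
    rw [LM, Polynomial.finset_sum_coeff]
    exact Finset.sum_congr rfl fun M _ => coeff_neg_one_pow_mul _ _ _
  -- split the sum by cardinality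
  have hsplit : ∑ M ∈ matchings G, g M =
      (∑ M ∈ (matchings G).filter (fun M => M.card = 0), g M)
      + ((∑ M ∈ (matchings G).filter (fun M => M.card = 1), g M)
      + ((∑ M ∈ (matchings G).filter (fun M => M.card = 2), g M)
      + (∑ M ∈ (matchings G).filter (fun M => 3 ≤ M.card), g M))) := by
    rw [← Finset.sum_filter_add_sum_filter_not (matchings G) (fun M => M.card = 0) g]
    congr 1
    rw [← Finset.sum_filter_add_sum_filter_not
      ((matchings G).filter (fun M => ¬ M.card = 0)) (fun M => M.card = 1) g]
    congr 1
    · apply Finset.sum_congr _ (fun _ _ => rfl)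
      rw [Finset.filter_filter]
      exact Finset.filter_congr fun M _ => by omega
    rw [← Finset.sum_filter_add_sum_filter_not
      (((matchings G).filter (fun M => ¬ M.card = 0)).filter (fun M => ¬ M.card = 1))
      (fun M => M.card = 2) g]
    congr 1
    · apply Finset.sum_congr _ (fun _ _ => rfl)
      rw [Finset.filter_filter, Finset.filter_filter]
      exact Finset.filter_congr fun M _ => by omega
    · apply Finset.sum_congr _ (fun _ _ => rfl)
      rw [Finset.filter_filter, Finset.filter_filter]
      exact Finset.filter_congr fun M _ => by omega
  -- piece 0
  have hp0 : ∑ M ∈ (matchings G).filter (fun M => M.card = 0), g M = (esymmDeg G 4 : ℂ) := by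
    rw [matchings_filter_zero, Finset.sum_singleton, hg]
    have hcov : covered (∅ : Finset (Sym2 V)) = ∅ := by
      ext a
      simp [covered]
    simp only [Finset.card_empty, pow_zero, one_mul, hcov, Finset.sdiff_empty]
    have hcard : n - 4 = (univ : Finset V).card - 4 := by
      rw [hnn, Finset.card_univ]
    rw [hcard, vieta _ _ (by rwa [Finset.card_univ])]
    rw [esymmDeg]
    push_cast
    norm_num
  -- piece 1
  have hp1 : ∑ M ∈ (matchings G).filter (fun M => M.card = 1), g M
      = -(((edges G).card : ℂ) * (esymmDeg G 2 : ℂ) - (esymmDeg G 1 : ℂ) * (A G 2 : ℂ)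
          + (A G 3 : ℂ) + (B G : ℂ)) := by
    rw [matchings_filter_one,
      Finset.sum_image (fun a _ b _ h => Finset.singleton_injective h), ← sum_S G, ← Finset.sum_neg_distrib]
    refine Finset.sum_congr rfl fun e he => ?_
    have hkey : ∀ e ∈ edges G,
        (∏ v ∈ univ \ covered ({e} : Finset (Sym2 V)), (X - C ((deg G v : ℂ)))).coeff (n - 4)
          = ∑ t ∈ (univ \ covered ({e} : Finset (Sym2 V))).powersetCard 2,
              ∏ i ∈ t, (deg G i : ℂ) := by
      refine edge_cases G fun x y hadj => ?_
      have hc2 : ({x, y} : Finset V).card = 2 := by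
        rw [Finset.card_insert_of_notMem (by simp [hadj.ne]), Finset.card_singleton]
      have hcard : (univ \ covered ({s(x, y)} : Finset (Sym2 V))).card = n - 2 := by
        rw [covered_pair, Finset.card_sdiff_of_subset (Finset.subset_univ _), hc2, Finset.card_univ]
      have h42 : n - 4 = (univ \ covered ({s(x, y)} : Finset (Sym2 V))).card - 2 := by
        rw [hcard]; omega
      rw [h42, vieta _ _ (by rw [hcard]; omega)]
      simp
    simp only [hg]
    rw [hkey e he]
    simp
  -- piece 2
  have hp2 : ∑ M ∈ (matchings G).filter (fun M => M.card = 2), g M = (phi2 G : ℂ) := by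
    have hone : ∀ M ∈ (matchings G).filter (fun M => M.card = 2), g M = 1 := by
      intro M hM
      rw [Finset.mem_filter] at hM
      have hcc := covered_card G hM.1
      have hcard : (univ \ covered M).card = n - 4 := by
        rw [Finset.card_sdiff_of_subset (Finset.subset_univ _), hcc, hM.2, Finset.card_univ]
      simp only [hg]
      have h40 : n - 4 = (univ \ covered M).card - 0 := by omega
      rw [h40, vieta _ _ (Nat.zero_le _), hM.2]
      simp [Finset.powersetCard_zero]
    rw [Finset.sum_congr rfl hone, Finset.sum_const, phi2, nsmul_eq_mul, mul_one]
  -- piece 3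
  have hp3 : ∑ M ∈ (matchings G).filter (fun M => 3 ≤ M.card), g M = 0 := by
    refine Finset.sum_eq_zero fun M hM => ?_
    rw [Finset.mem_filter] at hM
    have hcc := covered_card G hM.1
    have hle : (covered M).card ≤ n := by
      rw [hnn]
      exact Finset.card_le_univ _
    have hcard : (univ \ covered M).card = n - 2 * M.card := by
      rw [Finset.card_sdiff_of_subset (Finset.subset_univ _), hcc, Finset.card_univ]
    have hdeg : (∏ v ∈ univ \ covered M, (X - C ((deg G v : ℂ)))).natDegree < n - 4 := by
      rw [natDegree_prodXC, hcard]
      omega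
    simp only [hg]
    rw [Polynomial.coeff_eq_zero_of_natDegree_lt hdeg, mul_zero]
  rw [hLM, hsplit, hp0, hp1, hp2, hp3]
  ring

end Main

/-- The coefficient of `x^(n-4)` in `LM_G` equals
`E_4 - m E_2 + E_1 A_2 - A_3 - B + φ_2(G)`. -/
theorem coeff_four [Fintype V] (G : SimpleGraph V) (hn : 4 ≤ Fintype.card V) :
    (LM ℂ G).coeff (Fintype.card V - 4) =
      (esymmDeg G 4 : ℂ) - ((edges G).card : ℂ) * (esymmDeg G 2 : ℂ)
        + (esymmDeg G 1 : ℂ) * (A G 2 : ℂ) - (A G 3 : ℂ) - (B G : ℂ) + (phi2 G : ℂ) := by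
  exact coeff_four' G hn

end LMRIV
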